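/- Let A be the 3-dimensional complex 3-Lie algebra with [e1,e2,e3] = e1, and let T have matrix O_7: T(e1) = a13 e3, T(e2) = a21 e1 + e2 + a23 e3, T(e3) = e1 + (1/a21) e2 + (a23/a21 + a13) e3, where a21 ≠ 0. Then T is an O-operator with respect to the adjoint representation. -/
import Mathlib


open Finset

/-- The standard basis of `ℂ³`: `e 0 = e₁`, `e 1 = e₂`, `e 2 = e₃`. -/
def e (i : Fin 3) : Fin 3 → ℂ := fun j => if j = i then 1 else 0

/-- The trilinear skew-symmetric bracket on `ℂ³` determined by `[e₁,e₂,e₃] = e₁`. -/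
def br (x y z : Fin 3 → ℂ) : Fin 3 → ℂ := fun i =>
  if i = 0 then
    x 0 * (y 1 * z 2 - y 2 * z 1) - x 1 * (y 0 * z 2 - y 2 * z 0)
      + x 2 * (y 0 * z 1 - y 1 * z 0)
  else 0

lemma decomp (v : Fin 3 → ℂ) : v = v 0 • e 0 + v 1 • e 1 + v 2 • e 2 := by
  funext j; fin_cases j <;> simp [e]

lemma br_smul (a b c : Fin 3 → ℂ) :
    br a b c = (a 0 * (b 1 * c 2 - b 2 * c 1) - a 1 * (b 0 * c 2 - b 2 * c 0)
      + a 2 * (b 0 * c 1 - b 1 * c 0)) • e 0 := by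
  funext i; fin_cases i <;> simp [br, e]

/-- `T` is an `𝒪`-operator with respect to the adjoint representation. -/
def IsOOperator (T : (Fin 3 → ℂ) →ₗ[ℂ] (Fin 3 → ℂ)) : Prop :=
  ∀ x y z : Fin 3 → ℂ, br (T x) (T y) (T z) =
    T (br (T x) (T y) z + br (T y) (T z) x + br (T z) (T x) y)

set_option maxHeartbeats 1000000 in
/-- The linear map with matrix `O₇` (with `a₂₁ ≠ 0`) is an `𝒪`-operator. -/
theorem O7_is_O_operator (T : (Fin 3 → ℂ) →ₗ[ℂ] (Fin 3 → ℂ))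
    (a13 a21 a23 : ℂ) (ha : a21 ≠ 0)
    (h1 : T (e 0) = a13 • e 2)
    (h2 : T (e 1) = a21 • e 0 + e 1 + a23 • e 2)
    (h3 : T (e 2) = e 0 + (1 / a21) • e 1 + (a23 / a21 + a13) • e 2) :
    IsOOperator T := by
  have comp : ∀ v : Fin 3 → ℂ, T v = fun i =>
      if i = 0 then a21 * v 1 + v 2
      else if i = 1 then v 1 + v 2 / a21
      else a13 * v 0 + a23 * v 1 + (a23 / a21 + a13) * v 2 := by
    intro v
    have h := congrArg T (decomp v)
    rw [map_add, map_add, map_smul, map_smul, map_smul, h1, h2, h3] at h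
    rw [h]
    funext i
    fin_cases i <;> simp [e] <;> ring
  intro x y z
  rw [br_smul (T x) (T y) z, br_smul (T y) (T z) x, br_smul (T z) (T x) y,
    map_add, map_add, map_smul, map_smul, map_smul, h1]
  rw [comp x, comp y, comp z]
  funext i
  fin_cases i <;> simp [br, e] <;> field_simp <;> ring
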